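/- Let ω₀, s₁, s₂, θ ∈ ℝ and let G be the 3×3 complex amplification matrix of the MRT-LB scheme: first row ((1 − s₁/2 − ω₀s₂/2)e^{iθ}, (s₂/2 − ω₀s₂/2)e^{iθ}, (s₁/2 − ω₀s₂/2)e^{iθ}), second row (ω₀s₂, ω₀s₂ − s₂ + 1, ω₀s₂), third row ((s₁/2 − ω₀s₂/2)e^{−iθ}, (s₂/2 − ω₀s₂/2)e^{−iθ}, (1 − s₁/2 − ω₀s₂/2)e^{−iθ}). Then the characteristic polynomial of G is det(λI − G) = λ³ + p₂λ² + p₁λ + p₀, where p₀ = (s₁−1)(1−s₂), p₁ = (s₁−1)(s₂ω₀−1) + [(s₁−2)(s₂−1) + s₂ω₀(1−s₁)]·cos θ, and p₂ = s₂ − s₂ω₀ − 1 + (s₂ω₀ + s₁ − 2)·cos θ. -/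
import Mathlib


open Polynomial

/-- The characteristic polynomial of the complex amplification
matrix `G` of the MRT-LB scheme is `λ³ + p₂λ² + p₁λ + p₀`. -/
theorem charpoly_of_G
    (ω₀ s₁ s₂ θ p₀ p₁ p₂ : ℝ)
    (hp₀ : p₀ = (s₁ - 1) * (1 - s₂))
    (hp₁ : p₁ = (s₁ - 1) * (s₂ * ω₀ - 1)
      + ((s₁ - 2) * (s₂ - 1) + s₂ * ω₀ * (1 - s₁)) * Real.cos θ)
    (hp₂ : p₂ = s₂ - s₂ * ω₀ - 1 + (s₂ * ω₀ + s₁ - 2) * Real.cos θ)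
    (G : Matrix (Fin 3) (Fin 3) ℂ)
    (hG : G = !![((1 - s₁ / 2 - ω₀ * s₂ / 2 : ℝ) : ℂ) * Complex.exp (θ * Complex.I),
                 ((s₂ / 2 - ω₀ * s₂ / 2 : ℝ) : ℂ) * Complex.exp (θ * Complex.I),
                 ((s₁ / 2 - ω₀ * s₂ / 2 : ℝ) : ℂ) * Complex.exp (θ * Complex.I);
                 ((ω₀ * s₂ : ℝ) : ℂ),
                 ((ω₀ * s₂ - s₂ + 1 : ℝ) : ℂ),
                 ((ω₀ * s₂ : ℝ) : ℂ);
                 ((s₁ / 2 - ω₀ * s₂ / 2 : ℝ) : ℂ) * Complex.exp (-(θ * Complex.I)),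
                 ((s₂ / 2 - ω₀ * s₂ / 2 : ℝ) : ℂ) * Complex.exp (-(θ * Complex.I)),
                 ((1 - s₁ / 2 - ω₀ * s₂ / 2 : ℝ) : ℂ) * Complex.exp (-(θ * Complex.I))]) :
    G.charpoly = X ^ 3 + C (p₂ : ℂ) * X ^ 2 + C (p₁ : ℂ) * X + C (p₀ : ℂ) := by
  subst hG hp₀ hp₁ hp₂
  have hEF : Complex.exp (θ * Complex.I) * Complex.exp (-(θ * Complex.I)) = 1 := by
    rw [← Complex.exp_add]; simp
  have hsum : Complex.exp (θ * Complex.I) + Complex.exp (-(θ * Complex.I))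
      = 2 * (Real.cos θ : ℂ) := by
    rw [Complex.ofReal_cos, Complex.cos]; ring
  rw [Matrix.charpoly]
  apply Polynomial.funext
  intro r
  rw [Matrix.det_fin_three]
  simp [Matrix.charmatrix_apply, Matrix.diagonal_apply]
  simp only [← Complex.ofReal_cos]
  linear_combination
    (-1 + r + (s₂ : ℂ) + (s₁ : ℂ) - (s₁ : ℂ) * r - (s₁ : ℂ) * (s₂ : ℂ)
      - (ω₀ : ℂ) * (s₂ : ℂ) * r + (ω₀ : ℂ) * (s₁ : ℂ) * (s₂ : ℂ) * r) * hEF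
    + (r - r ^ 2 - (s₂ : ℂ) * r - (s₁ : ℂ) * r / 2 + (s₁ : ℂ) * r ^ 2 / 2
      + (s₁ : ℂ) * (s₂ : ℂ) * r / 2 + (ω₀ : ℂ) * (s₂ : ℂ) * r / 2
      + (ω₀ : ℂ) * (s₂ : ℂ) * r ^ 2 / 2
      - (ω₀ : ℂ) * (s₁ : ℂ) * (s₂ : ℂ) * r / 2) * hsum
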